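/- Let p ≥ 2 be an integer, I ⊆ {0,1,...,p−1}, and n ≥ 2. For every 0 ≤ k < p^n, writing k = p·b + d with integers b, d and 0 ≤ d < p, one has π_{p^n,I}(k) = p·π_{p^{n−1},I}(b) + d if b ∈ I_{p^{n−1}}, and π_{p^n,I}(k) = p·π_{p^{n−1},I}(b) + (p − d − 1) if b ∉ I_{p^{n−1}}. -/

import Mathlib

/-- The (not necessarily continuous) piecewise linear map `g_{p,I} : [0,1] → [0,1]`:
on `[k/p, (k+1)/p)` it is `x ↦ p·x − k` if `k ∈ I` and `x ↦ k + 1 − p·x` if `k ∉ I`,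
with `g_{p,I}(1) = 1` if `p − 1 ∈ I` and `g_{p,I}(1) = 0` otherwise. -/
noncomputable def gpI (p : ℕ) (I : Finset ℕ) (x : ℝ) : ℝ :=
  if x = 1 then (if p - 1 ∈ I then 1 else 0)
  else if (⌊(p : ℝ) * x⌋).toNat ∈ I then (p : ℝ) * x - (⌊(p : ℝ) * x⌋).toNat
  else ((⌊(p : ℝ) * x⌋).toNat : ℝ) + 1 - (p : ℝ) * x

/-- `I_{p^n}` is the set of indices `k < p^n` such that the `n`-fold iterate of `g_{p,I}`
is increasing on `(k/p^n, (k+1)/p^n)`, where it is given by `x ↦ p^n·x − k`. -/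
def ISet (p : ℕ) (I : Finset ℕ) (n : ℕ) : Set ℕ :=
  {k | k < p ^ n ∧ ∀ x ∈ Set.Ioo ((k : ℝ) / (p : ℝ) ^ n) (((k : ℝ) + 1) / (p : ℝ) ^ n),
    (gpI p I)^[n] x = (p : ℝ) ^ n * x - (k : ℝ)}

/-- The permutation `π_{p^n, I}` of `{0, …, p^n − 1}`: `π_{p^1,I}` is the identity, and for
`a·p^{n−1} ≤ k < (a+1)·p^{n−1}`, `π_{p^n,I}(k) = a·p^{n−1} + π_{p^{n−1},I}(k − a·p^{n−1})`
if `a ∈ I`, and `π_{p^n,I}(k) = a·p^{n−1} + π_{p^{n−1},I}(p^{n−1} − (k − a·p^{n−1}) − 1)`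
if `a ∉ I`. -/
def piPowI (p : ℕ) (I : Finset ℕ) : ℕ → ℕ → ℕ
  | 0, k => k
  | n + 1, k =>
    if k / p ^ n ∈ I then k / p ^ n * p ^ n + piPowI p I n (k % p ^ n)
    else k / p ^ n * p ^ n + piPowI p I n (p ^ n - k % p ^ n - 1)

/-- The sign of the `m`-fold iterate on the `k`-th interval: `true` means increasing. -/
def sgnPI (p : ℕ) (I : Finset ℕ) : ℕ → ℕ → Bool
  | 0, _ => true
  | m + 1, k =>
    if k / p ^ m ∈ I then sgnPI p I m (k % p ^ m)
    else !(sgnPI p I m (p ^ m - k % p ^ m - 1))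

lemma iter_eq (p : ℕ) (hp : 2 ≤ p) (I : Finset ℕ) :
    ∀ m : ℕ, ∀ k : ℕ, k < p ^ m →
      ∀ x ∈ Set.Ioo ((k : ℝ) / (p : ℝ) ^ m) (((k : ℝ) + 1) / (p : ℝ) ^ m),
      (gpI p I)^[m] x =
        if sgnPI p I m k then (p : ℝ) ^ m * x - (k : ℝ)
        else ((k : ℝ) + 1) - (p : ℝ) ^ m * x := by
  have hpR : (0 : ℝ) < (p : ℝ) := by exact_mod_cast Nat.lt_of_lt_of_le Nat.zero_lt_two hp
  intro m
  induction m with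
  | zero =>
    intro k hk x hx
    simp only [pow_zero, Nat.lt_one_iff] at hk
    subst hk
    simp only [pow_zero, Nat.cast_zero, zero_div, sgnPI] at hx ⊢
    simp [Function.iterate_zero]
  | succ m ih =>
    intro k hk x hx
    have hP : (0 : ℝ) < (p : ℝ) ^ m := pow_pos hpR m
    have hP1 : (0 : ℝ) < (p : ℝ) ^ (m + 1) := pow_pos hpR (m + 1)
    obtain ⟨a, ha_def⟩ : ∃ a, a = k / p ^ m := ⟨_, rfl⟩
    obtain ⟨r, hr_def⟩ : ∃ r, r = k % p ^ m := ⟨_, rfl⟩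
    have hpm1 : 0 < p ^ m := pow_pos (by omega) m
    have hkar : p ^ m * a + r = k := by rw [ha_def, hr_def]; exact Nat.div_add_mod k (p ^ m)
    have hrlt : r < p ^ m := by rw [hr_def]; exact Nat.mod_lt _ hpm1
    have halt : a < p := by
      rw [ha_def, Nat.div_lt_iff_lt_mul (pow_pos (by omega) m), mul_comm, ← pow_succ]
      exact hk
    -- real cast identity
    have hkR : (p : ℝ) ^ m * (a : ℝ) + (r : ℝ) = (k : ℝ) := by
      exact_mod_cast congrArg (Nat.cast : ℕ → ℝ) hkar
    obtain ⟨hx1, hx2⟩ := hx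
    have hx1' : (k : ℝ) < (p : ℝ) ^ (m + 1) * x := by
      rwa [div_lt_iff₀ hP1, mul_comm] at hx1
    have hx2' : (p : ℝ) ^ (m + 1) * x < (k : ℝ) + 1 := by
      rwa [lt_div_iff₀ hP1, mul_comm] at hx2
    have hps : (p : ℝ) ^ (m + 1) = (p : ℝ) ^ m * (p : ℝ) := by ring
    -- bounds on p * x
    have hpx1 : (k : ℝ) / (p : ℝ) ^ m < (p : ℝ) * x := by
      rw [div_lt_iff₀ hP]
      nlinarith [hx1']
    have hpx2 : (p : ℝ) * x < ((k : ℝ) + 1) / (p : ℝ) ^ m := by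
      rw [lt_div_iff₀ hP]
      nlinarith [hx2']
    have haLB : (a : ℝ) ≤ (k : ℝ) / (p : ℝ) ^ m := by
      rw [le_div_iff₀ hP]
      nlinarith [Nat.cast_nonneg (α := ℝ) r]
    have haUB : ((k : ℝ) + 1) / (p : ℝ) ^ m ≤ (a : ℝ) + 1 := by
      rw [div_le_iff₀ hP]
      have : (r : ℝ) + 1 ≤ (p : ℝ) ^ m := by exact_mod_cast hrlt
      nlinarith
    have hfl : ⌊(p : ℝ) * x⌋ = (a : ℤ) := by
      rw [Int.floor_eq_iff]
      constructor
      · push_cast; linarith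
      · push_cast; linarith
    have hx_ne : x ≠ 1 := by
      intro h
      subst h
      have : (k : ℝ) + 1 ≤ (p : ℝ) ^ (m + 1) := by exact_mod_cast hk
      linarith
    have hg : gpI p I x =
        if a ∈ I then (p : ℝ) * x - (a : ℝ) else (a : ℝ) + 1 - (p : ℝ) * x := by
      unfold gpI
      rw [if_neg hx_ne, hfl]
      simp
    rw [Function.iterate_succ_apply]
    have hq1 : (k : ℝ) < (p : ℝ) * x * (p : ℝ) ^ m := (div_lt_iff₀ hP).1 hpx1
    have hq2 : (p : ℝ) * x * (p : ℝ) ^ m < (k : ℝ) + 1 := (lt_div_iff₀ hP).1 hpx2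
    by_cases ha : a ∈ I
    · rw [hg, if_pos ha]
      have hy : (p : ℝ) * x - (a : ℝ) ∈
          Set.Ioo ((r : ℝ) / (p : ℝ) ^ m) (((r : ℝ) + 1) / (p : ℝ) ^ m) := by
        constructor
        · rw [div_lt_iff₀ hP]
          linarith [hkR, hq1]
        · rw [lt_div_iff₀ hP]
          linarith [hkR, hq2]
      rw [ih r hrlt _ hy]
      have hs : sgnPI p I (m + 1) k = sgnPI p I m r := by
        rw [sgnPI, ← ha_def, ← hr_def, if_pos ha]
      rw [hs]
      by_cases hb : sgnPI p I m r
      · rw [if_pos hb, if_pos hb, hps]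
        linear_combination (-(1:ℝ)) * hkR
      · rw [if_neg hb, if_neg hb, hps]
        linear_combination hkR
    · rw [hg, if_neg ha]
      obtain ⟨s, hs_def⟩ : ∃ s, s = p ^ m - r - 1 := ⟨_, rfl⟩
      have hslt : s < p ^ m := by omega
      have hsR : (s : ℝ) = (p : ℝ) ^ m - (r : ℝ) - 1 := by
        have : (s : ℕ) + r + 1 = p ^ m := by omega
        have := congrArg (Nat.cast : ℕ → ℝ) this
        push_cast at this
        linarith
      have hy : (a : ℝ) + 1 - (p : ℝ) * x ∈
          Set.Ioo ((s : ℝ) / (p : ℝ) ^ m) (((s : ℝ) + 1) / (p : ℝ) ^ m) := by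
        constructor
        · rw [div_lt_iff₀ hP]
          linarith [hkR, hsR, hq2]
        · rw [lt_div_iff₀ hP]
          linarith [hkR, hsR, hq1]
      rw [ih s hslt _ hy]
      have hsg : sgnPI p I (m + 1) k = !(sgnPI p I m s) := by
        rw [sgnPI, ← ha_def, ← hr_def, if_neg ha, hs_def]
      rw [hsg]
      by_cases hb : sgnPI p I m s
      · rw [if_pos hb, hb, Bool.not_true, if_neg (by simp), hps]
        linear_combination hkR - hsR
      · rw [if_neg hb]
        rw [Bool.not_eq_true] at hb
        rw [hb, Bool.not_false, if_pos rfl, hps]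
        linear_combination hsR - hkR

lemma ISet_iff (p : ℕ) (hp : 2 ≤ p) (I : Finset ℕ) (m k : ℕ) (hk : k < p ^ m) :
    k ∈ ISet p I m ↔ sgnPI p I m k = true := by
  have hP : (0 : ℝ) < (p : ℝ) ^ m :=
    pow_pos (by exact_mod_cast Nat.lt_of_lt_of_le Nat.zero_lt_two hp) m
  constructor
  · intro h
    by_contra hs
    rw [Bool.not_eq_true] at hs
    set x₀ : ℝ := ((k : ℝ) + 1 / 3) / (p : ℝ) ^ m with hx0
    have hx₀mem : x₀ ∈ Set.Ioo ((k : ℝ) / (p : ℝ) ^ m) (((k : ℝ) + 1) / (p : ℝ) ^ m) := by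
      constructor
      · exact (div_lt_div_iff_of_pos_right hP).2 (by norm_num)
      · exact (div_lt_div_iff_of_pos_right hP).2 (by norm_num)
    have e1 := h.2 x₀ hx₀mem
    have e2 := iter_eq p hp I m k hk x₀ hx₀mem
    rw [hs] at e2
    simp only [Bool.false_eq_true, if_false] at e2
    have hPx : (p : ℝ) ^ m * x₀ = (k : ℝ) + 1 / 3 := by
      rw [hx0]; field_simp
    rw [e1] at e2
    rw [hPx] at e2
    linarith
  · intro hs
    refine ⟨hk, fun x hx => ?_⟩
    rw [iter_eq p hp I m k hk x hx, if_pos hs]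

lemma piPowI_zero (p : ℕ) (I : Finset ℕ) (k : ℕ) : piPowI p I 0 k = k := rfl

lemma piPowI_succ (p : ℕ) (I : Finset ℕ) (n k : ℕ) :
    piPowI p I (n + 1) k =
      if k / p ^ n ∈ I then k / p ^ n * p ^ n + piPowI p I n (k % p ^ n)
      else k / p ^ n * p ^ n + piPowI p I n (p ^ n - k % p ^ n - 1) := rfl

lemma sgnPI_zero (p : ℕ) (I : Finset ℕ) (k : ℕ) : sgnPI p I 0 k = true := rfl

lemma sgnPI_succ (p : ℕ) (I : Finset ℕ) (n k : ℕ) :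
    sgnPI p I (n + 1) k =
      if k / p ^ n ∈ I then sgnPI p I n (k % p ^ n)
      else !(sgnPI p I n (p ^ n - k % p ^ n - 1)) := rfl

lemma piPowI_bottom (p : ℕ) (hp : 2 ≤ p) (I : Finset ℕ) :
    ∀ m : ℕ, ∀ k < p ^ (m + 1),
      piPowI p I (m + 1) k = p * piPowI p I m (k / p) +
        (if sgnPI p I m (k / p) then k % p else p - k % p - 1) := by
  intro m
  induction m with
  | zero =>
    intro k hk
    have h1 := (Nat.div_add_mod k p).symm
    rw [piPowI_succ]
    simp only [pow_zero, Nat.div_one, Nat.mod_one, piPowI_zero, sgnPI_zero, mul_one, if_true]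
    split_ifs <;> simpa using h1
  | succ m ihm =>
    intro k hk
    have hppos : 0 < p := by omega
    have hpm1 : 0 < p ^ (m + 1) := pow_pos hppos _
    obtain ⟨a, ha⟩ : ∃ a, a = k / p ^ (m + 1) := ⟨_, rfl⟩
    obtain ⟨r, hr⟩ : ∃ r, r = k % p ^ (m + 1) := ⟨_, rfl⟩
    obtain ⟨q, hq⟩ : ∃ q, q = r / p := ⟨_, rfl⟩
    obtain ⟨d, hd⟩ : ∃ d, d = r % p := ⟨_, rfl⟩
    have hrlt : r < p ^ (m + 1) := by rw [hr]; exact Nat.mod_lt _ hpm1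
    have h5 : p * q + d = r := by rw [hq, hd]; exact Nat.div_add_mod r p
    have hdlt : d < p := by rw [hd]; exact Nat.mod_lt _ hppos
    have hpow : p ^ (m + 1) = p * p ^ m := by rw [pow_succ, Nat.mul_comm]
    have hqlt : q < p ^ m := by
      rw [hq, Nat.div_lt_iff_lt_mul hppos, Nat.mul_comm, ← hpow]
      exact hrlt
    have hdiv1 : k / p / p ^ m = a := by
      rw [ha, Nat.div_div_eq_div_mul, ← hpow]
    have hmod1 : k / p % p ^ m = q := by
      rw [hq, hr, ← Nat.mod_mul_right_div_self, ← hpow]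
    have hmodp : k % p = d := by
      rw [hd, hr, Nat.mod_mod_of_dvd]
      exact dvd_pow_self p (Nat.succ_ne_zero m)
    rw [piPowI_succ p I (m + 1) k, piPowI_succ p I m (k / p), sgnPI_succ p I m (k / p),
      ← ha, ← hr, hdiv1, hmod1]
    by_cases hA : a ∈ I
    · rw [if_pos hA, if_pos hA, if_pos hA]
      have hir := ihm r hrlt
      rw [← hq, ← hd] at hir
      rw [hir, hmodp]
      split_ifs with hB
      · rw [hpow]; ring
      · rw [hpow]; ring
    · rw [if_neg hA, if_neg hA, if_neg hA]
      have hslt : p ^ (m + 1) - r - 1 < p ^ (m + 1) := by omega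
      have hkey : p ^ (m + 1) - r - 1 = p * (p ^ m - q - 1) + (p - d - 1) := by
        have h4 : (p : ℤ) * q + d = r := by exact_mod_cast h5
        have h6 : (p : ℤ) ^ (m + 1) = p * p ^ m := by exact_mod_cast hpow
        zify [show r ≤ p ^ (m + 1) by omega, show 1 ≤ p ^ (m + 1) - r by omega,
          show q ≤ p ^ m by omega, show 1 ≤ p ^ m - q by omega,
          show d ≤ p by omega, show 1 ≤ p - d by omega]
        linear_combination h6 + h4
      have hsd : (p ^ (m + 1) - r - 1) / p = p ^ m - q - 1 := by
        rw [hkey, Nat.mul_add_div hppos, Nat.div_eq_of_lt (by omega), add_zero]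
      have hsm : (p ^ (m + 1) - r - 1) % p = p - d - 1 := by
        rw [hkey, Nat.mul_add_mod, Nat.mod_eq_of_lt (by omega)]
      have hir := ihm (p ^ (m + 1) - r - 1) hslt
      rw [hsd, hsm] at hir
      rw [hir, hmodp]
      have hdd : p - (p - d - 1) - 1 = d := by omega
      rw [hdd]
      cases hB : sgnPI p I m (p ^ m - q - 1) with
      | true =>
        simp only [hB, Bool.not_true, Bool.false_eq_true, if_false, if_true]
        rw [hpow]; ring
      | false =>
        simp only [hB, Bool.not_false, Bool.false_eq_true, if_false, if_true]
        rw [hpow]; ring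

/-- Recursive description of `π_{p^n,I}` from below: for `k = p·b + d` with `0 ≤ d < p`,
`π_{p^n,I}(k) = p·π_{p^{n−1},I}(b) + d` if `b ∈ I_{p^{n−1}}`, and
`π_{p^n,I}(k) = p·π_{p^{n−1},I}(b) + (p − d − 1)` if `b ∉ I_{p^{n−1}}`. -/
theorem piPowI_recursion (p n : ℕ) (hp : 2 ≤ p) (hn : 2 ≤ n)
    (I : Finset ℕ) (hI : ∀ i ∈ I, i < p) :
    ∀ k < p ^ n,
      (k / p ∈ ISet p I (n - 1) →
        piPowI p I n k = p * piPowI p I (n - 1) (k / p) + k % p) ∧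
      (k / p ∉ ISet p I (n - 1) →
        piPowI p I n k = p * piPowI p I (n - 1) (k / p) + (p - k % p - 1)) := by
  obtain ⟨m, rfl⟩ : ∃ m, n = m + 1 := ⟨n - 1, by omega⟩
  intro k hk
  have hk' : k / p < p ^ m := by
    rw [Nat.div_lt_iff_lt_mul (by omega)]
    calc k < p ^ (m + 1) := hk
      _ = p ^ m * p := pow_succ p m
  have hiff := ISet_iff p hp I m (k / p) hk'
  have hb := piPowI_bottom p hp I m k hk
  simp only [Nat.add_sub_cancel]
  constructor
  · intro hmem
    rw [hb, if_pos (hiff.1 hmem)]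
  · intro hmem
    have hfalse : sgnPI p I m (k / p) = false := by
      rw [Bool.eq_false_iff]
      intro h
      exact hmem (hiff.2 h)
    rw [hb, hfalse]
    simp
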